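/- Let ψ ∈ H¹(ℝ³) and ψ̃ ∈ H¹(ℝ³). Then there exists a universal constant (which can be taken explicit) such that for every k ∈ ℝ³ with k ≠ 0, |⟨ψ, G_·(k) ψ̃⟩_{L²(ℝ³)}| ≤ (1+|k|)/(|k|(1+|k|²)) · (‖ψ‖_{H¹}‖ψ̃‖_{L²} + ‖ψ‖_{L²}‖ψ̃‖_{H¹}), where ⟨ψ, G_·(k) ψ̃⟩ = ∫ dx ψ̄(x) |k|^{-1} e^{-2πi k·x} ψ̃(x). -/

import Mathlib

open Filter MeasureTheory Complex Real
open scoped ENNReal RealInnerProductSpace FourierTransform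
noncomputable section

abbrev E3 := EuclideanSpace ℝ (Fin 3)

/-- The `L²(ℝ³)` norm of a function. -/
def l2norm {F : Type*} [NormedAddCommGroup F] (f : E3 → F) : ℝ :=
  (eLpNorm f 2 (volume : Measure E3)).toReal

/-- The `H¹(ℝ³)` norm: `‖ψ‖_{H¹}² = ‖ψ‖_{L²}² + ‖∇ψ‖_{L²}²`. -/
def h1norm (f : E3 → ℂ) : ℝ :=
  Real.sqrt (l2norm f ^ 2 + l2norm (fun x => fderiv ℝ f x) ^ 2)

lemma l2norm_nonneg {F : Type*} [NormedAddCommGroup F] (f : E3 → F) : 0 ≤ l2norm f :=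
  ENNReal.toReal_nonneg

lemma l2_le_h1 (f : E3 → ℂ) : l2norm f ≤ h1norm f := by
  rw [h1norm, Real.le_sqrt (l2norm_nonneg f) (by positivity)]
  exact le_add_of_nonneg_right (by positivity)

lemma l2_fderiv_le_h1 (f : E3 → ℂ) : l2norm (fun x => fderiv ℝ f x) ≤ h1norm f := by
  rw [h1norm, Real.le_sqrt (l2norm_nonneg _) (by positivity)]
  exact le_add_of_nonneg_left (by positivity)

lemma holder_l1 {F G : Type*} [NormedAddCommGroup F] [NormedAddCommGroup G]
    {u : E3 → F} {v : E3 → G} (hu : MemLp u 2 (volume : Measure E3))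
    (hv : MemLp v 2 (volume : Measure E3)) :
    Integrable (fun x => ‖u x‖ * ‖v x‖) (volume : Measure E3) ∧
      ∫ x : E3, ‖u x‖ * ‖v x‖ ≤ l2norm u * l2norm v := by
  have hb : ∀ᵐ x : E3 ∂(volume), ‖(fun (a : F) (b : G) => ‖a‖ * ‖b‖) (u x) (v x)‖ ≤ ‖u x‖ * ‖v x‖ := by
    filter_upwards with x
    simp [_root_.abs_of_nonneg (mul_nonneg (norm_nonneg _) (norm_nonneg _))]
  have key : eLpNorm (fun x => ‖u x‖ * ‖v x‖) 1 (volume : Measure E3) ≤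
      eLpNorm u 2 (volume : Measure E3) * eLpNorm v 2 (volume : Measure E3) := by
    simpa using eLpNorm_le_eLpNorm_mul_eLpNorm'_of_norm (p := 2) (q := 2) (r := 1)
      hu.1 hv.1 (fun a b => ‖a‖ * ‖b‖) 1 (by simpa using hb)
  have hm : AEStronglyMeasurable (fun x => ‖u x‖ * ‖v x‖) (volume : Measure E3) :=
    hu.1.norm.mul hv.1.norm
  have hint : Integrable (fun x => ‖u x‖ * ‖v x‖) (volume : Measure E3) :=
    memLp_one_iff_integrable.mp ⟨hm, key.trans_lt (ENNReal.mul_lt_top hu.2 hv.2)⟩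
  refine ⟨hint, ?_⟩
  have h1 : ∫ x : E3, ‖u x‖ * ‖v x‖ = (eLpNorm (fun x => ‖u x‖ * ‖v x‖) 1 (volume : Measure E3)).toReal := by
    rw [eLpNorm_one_eq_lintegral_enorm, ← integral_norm_eq_lintegral_enorm hm]
    congr 1; funext x
    exact (_root_.abs_of_nonneg (mul_nonneg (norm_nonneg _) (norm_nonneg _))).symm
  rw [h1, l2norm, l2norm, ← ENNReal.toReal_mul]
  exact ENNReal.toReal_mono (ENNReal.mul_lt_top hu.2 hv.2).ne key

lemma shift_L1_bound (f : E3 → ℂ) (hf : Differentiable ℝ f)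
    (hD : Integrable (fun x : E3 => ‖fderiv ℝ f x‖) (volume : Measure E3)) (h : E3) :
    ∫ x : E3, ‖f x - f (x + h)‖ ≤ ‖h‖ * ∫ x : E3, ‖fderiv ℝ f x‖ := by
  set μt := (volume : Measure ℝ).restrict (Set.Ioc (0:ℝ) 1) with hμt
  set F : ℝ × E3 → ℝ := fun p => ‖fderiv ℝ f (p.2 + p.1 • h)‖ with hFdef
  have hFmeas : Measurable F :=
    (measurable_fderiv ℝ f).norm.comp (measurable_snd.add (measurable_fst.smul_const h))
  have hsec : ∀ t : ℝ, Integrable (fun x : E3 => F (t, x)) volume := fun t =>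
    hD.comp_add_right (t • h)
  have hsecint : ∀ t : ℝ, ∫ x : E3, F (t, x) = ∫ x : E3, ‖fderiv ℝ f x‖ := fun t =>
    integral_add_right_eq_self (fun x : E3 => ‖fderiv ℝ f x‖) (t • h)
  have hFint : Integrable F (μt.prod volume) := by
    rw [integrable_prod_iff hFmeas.aestronglyMeasurable]
    refine ⟨Eventually.of_forall fun t => hsec t, ?_⟩
    have heq : (fun t : ℝ => ∫ x : E3, ‖F (t, x)‖) = fun _ : ℝ => ∫ x : E3, ‖fderiv ℝ f x‖ := by
      funext t
      rw [← hsecint t]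
      congr 1; funext x
      exact _root_.abs_of_nonneg (norm_nonneg _)
    rw [heq]
    exact (integrableOn_const_iff).mpr (Or.inr (by simp [Real.volume_Ioc]))
  have hae : ∀ᵐ x : E3 ∂(volume : Measure E3), Integrable (fun t : ℝ => F (t, x)) μt :=
    hFint.prod_left_ae
  have hmaj : Integrable (fun x : E3 => ∫ t : ℝ, F (t, x) ∂μt) (volume : Measure E3) :=
    hFint.integral_prod_right
  have hval : ∫ x : E3, ∫ t : ℝ, F (t, x) ∂μt = ∫ x : E3, ‖fderiv ℝ f x‖ := by
    rw [← integral_integral_swap (f := fun (t : ℝ) (x : E3) => F (t, x)) hFint]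
    have : (fun t : ℝ => ∫ x : E3, F (t, x)) = fun _ : ℝ => ∫ x : E3, ‖fderiv ℝ f x‖ :=
      funext hsecint
    rw [this, integral_const]
    simp [hμt, Real.volume_Ioc]
  have hpt : ∀ᵐ x : E3 ∂(volume : Measure E3),
      ‖f x - f (x + h)‖ ≤ ‖h‖ * ∫ t : ℝ, F (t, x) ∂μt := by
    filter_upwards [hae] with x hx
    set g : ℝ → ℂ := fun t => f (x + t • h) with hg
    set g' : ℝ → ℂ := fun t => fderiv ℝ f (x + t • h) h with hg'
    have hgd : ∀ t : ℝ, HasDerivAt g (g' t) t := by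
      intro t
      have h1 : HasDerivAt (fun t : ℝ => x + t • h) h t := by
        simpa using ((hasDerivAt_id t).smul_const h).const_add x
      exact (hf (x + t • h)).hasFDerivAt.comp_hasDerivAt t h1
    have hg'meas : AEStronglyMeasurable g' ((volume : Measure ℝ).restrict (Set.Ioc (0:ℝ) 1)) := by
      have : g' = deriv g := funext fun t => ((hgd t).deriv).symm
      rw [this]
      exact (measurable_deriv g).aestronglyMeasurable
    have hbd : ∀ t : ℝ, ‖g' t‖ ≤ F (t, x) * ‖h‖ := fun t =>
      (fderiv ℝ f (x + t • h)).le_opNorm h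
    have hxi : IntegrableOn (fun t : ℝ => F (t, x) * ‖h‖) (Set.Ioc (0:ℝ) 1) volume :=
      hx.mul_const ‖h‖
    have hg'int : IntervalIntegrable g' volume 0 1 := by
      rw [intervalIntegrable_iff_integrableOn_Ioc_of_le zero_le_one]
      exact hxi.mono' hg'meas (Eventually.of_forall hbd)
    have hftc : ∫ t in (0:ℝ)..1, g' t = g 1 - g 0 :=
      intervalIntegral.integral_eq_sub_of_hasDerivAt (fun t _ => hgd t) hg'int
    have hg0 : g 0 = f x := by simp [hg]
    have hg1 : g 1 = f (x + h) := by simp [hg]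
    calc ‖f x - f (x + h)‖ = ‖g 1 - g 0‖ := by rw [hg0, hg1, norm_sub_rev]
      _ = ‖∫ t in (0:ℝ)..1, g' t‖ := by rw [hftc]
      _ ≤ ∫ t in (0:ℝ)..1, ‖g' t‖ := intervalIntegral.norm_integral_le_integral_norm zero_le_one
      _ ≤ ∫ t in (0:ℝ)..1, F (t, x) * ‖h‖ := by
          refine intervalIntegral.integral_mono_on zero_le_one hg'int.norm ?_ fun t _ => hbd t
          rw [intervalIntegrable_iff_integrableOn_Ioc_of_le zero_le_one]
          exact hxi
      _ = (∫ t in (0:ℝ)..1, F (t, x)) * ‖h‖ := intervalIntegral.integral_mul_const _ _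
      _ = ‖h‖ * ∫ t : ℝ, F (t, x) ∂μt := by
          rw [intervalIntegral.integral_of_le zero_le_one, mul_comm]
  calc ∫ x : E3, ‖f x - f (x + h)‖
      ≤ ∫ x : E3, ‖h‖ * ∫ t : ℝ, F (t, x) ∂μt :=
        integral_mono_of_nonneg (Eventually.of_forall fun x => norm_nonneg _)
          (hmaj.const_mul ‖h‖) hpt
    _ = ‖h‖ * ∫ x : E3, ∫ t : ℝ, F (t, x) ∂μt := integral_const_mul _ _
    _ = ‖h‖ * ∫ x : E3, ‖fderiv ℝ f x‖ := by rw [hval]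

lemma conj_mul_hasFDerivAt (ψ ψt : E3 → ℂ) (hψ : Differentiable ℝ ψ)
    (hψt : Differentiable ℝ ψt) (x : E3) :
    HasFDerivAt (fun y : E3 => (starRingEnd ℂ) (ψ y) * ψt y)
      ((starRingEnd ℂ) (ψ x) • fderiv ℝ ψt x +
        ψt x • ((Complex.conjCLE : ℂ →L[ℝ] ℂ).comp (fderiv ℝ ψ x))) x := by
  have hc : HasFDerivAt (fun y : E3 => (starRingEnd ℂ) (ψ y))
      ((Complex.conjCLE : ℂ →L[ℝ] ℂ).comp (fderiv ℝ ψ x)) x :=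
    (Complex.conjCLE.hasFDerivAt).comp x (hψ x).hasFDerivAt
  exact hc.mul (hψt x).hasFDerivAt

lemma conj_mul_fderiv_bound (ψ ψt : E3 → ℂ) (hψ : Differentiable ℝ ψ)
    (hψt : Differentiable ℝ ψt) (x : E3) :
    ‖fderiv ℝ (fun y : E3 => (starRingEnd ℂ) (ψ y) * ψt y) x‖ ≤
      ‖ψ x‖ * ‖fderiv ℝ ψt x‖ + ‖ψt x‖ * ‖fderiv ℝ ψ x‖ := by
  rw [(conj_mul_hasFDerivAt ψ ψt hψ hψt x).fderiv]
  have hcomp : ‖(Complex.conjCLE : ℂ →L[ℝ] ℂ).comp (fderiv ℝ ψ x)‖ ≤ ‖fderiv ℝ ψ x‖ := by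
    refine ContinuousLinearMap.opNorm_le_bound _ (norm_nonneg _) fun y => ?_
    rw [ContinuousLinearMap.comp_apply]
    calc ‖(Complex.conjCLE : ℂ →L[ℝ] ℂ) (fderiv ℝ ψ x y)‖ = ‖fderiv ℝ ψ x y‖ := by
          simp
      _ ≤ ‖fderiv ℝ ψ x‖ * ‖y‖ := (fderiv ℝ ψ x).le_opNorm y
  have hsmul : ∀ (c : ℂ) (A : E3 →L[ℝ] ℂ), ‖c • A‖ ≤ ‖c‖ * ‖A‖ := by
    intro c A
    refine ContinuousLinearMap.opNorm_le_bound _ (by positivity) fun y => ?_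
    rw [ContinuousLinearMap.smul_apply, smul_eq_mul, norm_mul, mul_assoc]
    exact mul_le_mul_of_nonneg_left (A.le_opNorm y) (norm_nonneg c)
  calc ‖(starRingEnd ℂ) (ψ x) • fderiv ℝ ψt x +
        ψt x • ((Complex.conjCLE : ℂ →L[ℝ] ℂ).comp (fderiv ℝ ψ x))‖
      ≤ ‖(starRingEnd ℂ) (ψ x) • fderiv ℝ ψt x‖ +
        ‖ψt x • ((Complex.conjCLE : ℂ →L[ℝ] ℂ).comp (fderiv ℝ ψ x))‖ := norm_add_le _ _
    _ ≤ ‖ψ x‖ * ‖fderiv ℝ ψt x‖ + ‖ψt x‖ * ‖fderiv ℝ ψ x‖ := by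
        refine add_le_add ((hsmul _ _).trans (le_of_eq (by simp)))
          ((hsmul _ _).trans (mul_le_mul_of_nonneg_left hcomp (norm_nonneg _)))


set_option maxHeartbeats 1000000 in
/-- For `ψ, ψ̃ ∈ H¹(ℝ³)` and every `k ≠ 0`,
`|⟨ψ, G_·(k) ψ̃⟩| ≤ C (1+|k|)/(|k|(1+|k|²)) (‖ψ‖_{H¹}‖ψ̃‖_{L²} + ‖ψ‖_{L²}‖ψ̃‖_{H¹})`,
where `G_x(k) = e^{-2πik·x}/|k|`. -/
theorem stmt_5 :
    ∃ C > (0 : ℝ), ∀ (ψ ψt : E3 → ℂ),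
      Differentiable ℝ ψ → MemLp ψ 2 (volume : Measure E3) →
      MemLp (fun x => fderiv ℝ ψ x) 2 (volume : Measure E3) →
      Differentiable ℝ ψt → MemLp ψt 2 (volume : Measure E3) →
      MemLp (fun x => fderiv ℝ ψt x) 2 (volume : Measure E3) →
      ∀ k : E3, k ≠ 0 →
        ‖∫ x : E3, (starRingEnd ℂ) (ψ x) *
            ((‖k‖⁻¹ : ℝ) * Complex.exp (-(2 * π * Complex.I) * (⟪k, x⟫ : ℝ))) * ψt x‖
          ≤ C * ((1 + ‖k‖) / (‖k‖ * (1 + ‖k‖ ^ 2))) *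
              (h1norm ψ * l2norm ψt + l2norm ψ * h1norm ψt) := by
  refine ⟨2, by norm_num, fun ψ ψt hψd hψ2 hψ'2 hψtd hψt2 hψt'2 k hk => ?_⟩
  set K := ‖k‖ with hKdef
  have hK : 0 < K := norm_pos_iff.mpr hk
  set f : E3 → ℂ := fun x => (starRingEnd ℂ) (ψ x) * ψt x with hfdef
  have hfdiff : Differentiable ℝ f := fun x =>
    (conj_mul_hasFDerivAt ψ ψt hψd hψtd x).differentiableAt
  -- Integrability of f and the L¹ bound
  have hnf : ∀ x : E3, ‖f x‖ = ‖ψ x‖ * ‖ψt x‖ := fun x => by simp [hfdef, norm_mul]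
  obtain ⟨hprod_int, hprod_bd⟩ := holder_l1 hψ2 hψt2
  have hfint : Integrable f (volume : Measure E3) :=
    hprod_int.mono' hfdiff.continuous.aestronglyMeasurable
      (Eventually.of_forall fun x => le_of_eq (hnf x))
  have hAint : ∫ x : E3, ‖f x‖ ≤ l2norm ψ * l2norm ψt := by
    calc ∫ x : E3, ‖f x‖ = ∫ x : E3, ‖ψ x‖ * ‖ψt x‖ :=
          integral_congr_ae (Eventually.of_forall hnf)
      _ ≤ l2norm ψ * l2norm ψt := hprod_bd
  -- Integrability of the derivative and its L¹ bound
  obtain ⟨hm1_int, hm1_bd⟩ := holder_l1 hψ2 hψt'2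
  obtain ⟨hm2_int, hm2_bd⟩ := holder_l1 hψt2 hψ'2
  have hDbd : ∀ x : E3, ‖fderiv ℝ f x‖ ≤
      ‖ψ x‖ * ‖fderiv ℝ ψt x‖ + ‖ψt x‖ * ‖fderiv ℝ ψ x‖ :=
    conj_mul_fderiv_bound ψ ψt hψd hψtd
  have hDint : Integrable (fun x : E3 => ‖fderiv ℝ f x‖) (volume : Measure E3) :=
    (hm1_int.add hm2_int).mono'
      (measurable_fderiv ℝ f).norm.aestronglyMeasurable
      (Eventually.of_forall fun x => by
        simpa [_root_.abs_of_nonneg (norm_nonneg (fderiv ℝ f x))] using hDbd x)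
  have hDle : ∫ x : E3, ‖fderiv ℝ f x‖ ≤
      l2norm ψ * l2norm (fun x => fderiv ℝ ψt x) +
      l2norm ψt * l2norm (fun x => fderiv ℝ ψ x) := by
    calc ∫ x : E3, ‖fderiv ℝ f x‖
        ≤ ∫ x : E3, (‖ψ x‖ * ‖fderiv ℝ ψt x‖ + ‖ψt x‖ * ‖fderiv ℝ ψ x‖) :=
          integral_mono_of_nonneg (Eventually.of_forall fun x => norm_nonneg _)
            (hm1_int.add hm2_int) (Eventually.of_forall hDbd)
      _ = (∫ x : E3, ‖ψ x‖ * ‖fderiv ℝ ψt x‖) + ∫ x : E3, ‖ψt x‖ * ‖fderiv ℝ ψ x‖ :=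
          integral_add hm1_int hm2_int
      _ ≤ _ := add_le_add hm1_bd hm2_bd
  -- The Fourier-type integral
  set I : ℂ := ∫ v : E3, 𝐞 (-⟪v, k⟫) • f v with hIdef
  have hpt : ∀ x : E3, (starRingEnd ℂ) (ψ x) *
      ((‖k‖⁻¹ : ℝ) * Complex.exp (-(2 * π * Complex.I) * (⟪k, x⟫ : ℝ))) * ψt x
      = ((‖k‖⁻¹ : ℝ) : ℂ) * (𝐞 (-⟪x, k⟫) • f x) := by
    intro x
    rw [Circle.smul_def, Real.fourierChar_apply]
    have hexp : Complex.exp (-(2 * π * Complex.I) * ((⟪k, x⟫ : ℝ) : ℂ))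
        = Complex.exp (((2 * π * (-⟪x, k⟫) : ℝ) : ℂ) * Complex.I) := by
      rw [real_inner_comm k x]; congr 1; push_cast; ring
    rw [hexp, hfdef, smul_eq_mul]
    push_cast
    ring
  have hint_eq : (∫ x : E3, (starRingEnd ℂ) (ψ x) *
      ((‖k‖⁻¹ : ℝ) * Complex.exp (-(2 * π * Complex.I) * (⟪k, x⟫ : ℝ))) * ψt x)
      = ((‖k‖⁻¹ : ℝ) : ℂ) * I := by
    rw [hIdef, ← integral_const_mul]
    exact integral_congr_ae (Eventually.of_forall hpt)
  have hnorm_eq : ‖∫ x : E3, (starRingEnd ℂ) (ψ x) *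
      ((‖k‖⁻¹ : ℝ) * Complex.exp (-(2 * π * Complex.I) * (⟪k, x⟫ : ℝ))) * ψt x‖
      = K⁻¹ * ‖I‖ := by
    rw [hint_eq, norm_mul]
    congr 1
    simp [_root_.abs_of_nonneg (inv_nonneg.mpr (norm_nonneg k)), hKdef]
  -- Bound A
  have hA : ‖I‖ ≤ l2norm ψ * l2norm ψt := by
    refine (norm_integral_le_integral_norm _).trans ?_
    calc ∫ v : E3, ‖𝐞 (-⟪v, k⟫) • f v‖ = ∫ v : E3, ‖f v‖ :=
          integral_congr_ae (Eventually.of_forall fun v => by simp [Circle.smul_def, Circle.norm_coe])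
      _ ≤ l2norm ψ * l2norm ψt := hAint
  -- Bound B via the half-period translate
  set h : E3 := (1 / (2 * ‖k‖ ^ 2) : ℝ) • k with hhdef
  have hnh : ‖h‖ = 1 / (2 * K) := by
    rw [hhdef, norm_smul, Real.norm_eq_abs, _root_.abs_of_nonneg (by positivity), ← hKdef]
    field_simp
  have hB : ‖I‖ ≤ (1 / (2 : ℝ)) * (‖h‖ * ∫ x : E3, ‖fderiv ℝ f x‖) := by
    have htrans := fourierIntegral_eq_half_sub_half_period_translate (f := f) hk hfint
    rw [hIdef, htrans]
    rw [norm_smul]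
    have h12 : ‖(1 / 2 : ℂ)‖ = 1 / 2 := by norm_num
    rw [h12]
    refine mul_le_mul_of_nonneg_left ?_ (by norm_num)
    refine (norm_integral_le_integral_norm _).trans ?_
    calc ∫ v : E3, ‖𝐞 (-⟪v, k⟫) • (f v - f (v + (1 / (2 * ‖k‖ ^ 2) : ℝ) • k))‖
        = ∫ v : E3, ‖f v - f (v + h)‖ :=
          integral_congr_ae (Eventually.of_forall fun v => by
            rw [hhdef]; simp [Circle.smul_def, Circle.norm_coe])
      _ ≤ ‖h‖ * ∫ x : E3, ‖fderiv ℝ f x‖ := shift_L1_bound f hfdiff hDint h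
  -- Combine
  set M : ℝ := h1norm ψ * l2norm ψt + l2norm ψ * h1norm ψt with hMdef
  have hM0 : 0 ≤ M := by
    have := l2norm_nonneg ψ; have := l2norm_nonneg ψt
    have h1 := (l2norm_nonneg ψ).trans (l2_le_h1 ψ)
    have h2 := (l2norm_nonneg ψt).trans (l2_le_h1 ψt)
    positivity
  have hA' : ‖I‖ ≤ M := by
    refine hA.trans ?_
    rw [hMdef]
    have := mul_le_mul_of_nonneg_right (l2_le_h1 ψ) (l2norm_nonneg ψt)
    nlinarith [mul_nonneg (l2norm_nonneg ψ) ((l2norm_nonneg ψt).trans (l2_le_h1 ψt))]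
  have hB' : 4 * K * ‖I‖ ≤ M := by
    have hD' : ∫ x : E3, ‖fderiv ℝ f x‖ ≤ M := by
      refine hDle.trans ?_
      rw [hMdef]
      have h1 := mul_le_mul_of_nonneg_left (l2_fderiv_le_h1 ψt) (l2norm_nonneg ψ)
      have h2 := mul_le_mul_of_nonneg_left (l2_fderiv_le_h1 ψ) (l2norm_nonneg ψt)
      nlinarith [mul_le_mul_of_nonneg_right (l2_le_h1 ψt) (l2norm_nonneg (fun x => fderiv ℝ ψ x))]
    have : ‖I‖ ≤ (1 / (2 : ℝ)) * ((1 / (2 * K)) * M) := by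
      refine hB.trans ?_
      rw [hnh]
      refine mul_le_mul_of_nonneg_left ?_ (by norm_num)
      exact mul_le_mul_of_nonneg_left hD' (by positivity)
    calc 4 * K * ‖I‖ ≤ 4 * K * ((1 / (2 : ℝ)) * ((1 / (2 * K)) * M)) := by
          exact mul_le_mul_of_nonneg_left this (by positivity)
      _ = M := by field_simp; ring
  have key : ‖I‖ * (1 + K ^ 2) ≤ 2 * (1 + K) * M := by
    nlinarith [mul_le_mul_of_nonneg_left hB' hK.le, hA', hM0, norm_nonneg I, hK]
  rw [hnorm_eq]
  have h2 : K⁻¹ * ‖I‖ ≤ (2 * (1 + K) * M) / (K * (1 + K ^ 2)) := by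
    rw [inv_mul_eq_div, div_le_div_iff₀ hK (by positivity)]
    calc ‖I‖ * (K * (1 + K ^ 2)) = ‖I‖ * (1 + K ^ 2) * K := by ring
      _ ≤ 2 * (1 + K) * M * K := mul_le_mul_of_nonneg_right key hK.le
  refine h2.trans (le_of_eq ?_)
  rw [hMdef]
  field_simp
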